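/- Let X be a compact metrizable zero-dimensional space and G a finitely generated group acting on X equicontinuously. Then (G,X) has the pseudo-orbit tracing property. -/

import Mathlib

open Metric Set

/-- An equicontinuous action of a finitely generated group on a compact metrizable
zero-dimensional space has the pseudo-orbit tracing property. -/
theorem stmt19 {G X : Type} [Group G] (hG : Group.FG G)
    [MetricSpace X] [CompactSpace X] [TotallyDisconnectedSpace X]
    (act : G → X → X)
    (hcont : ∀ g : G, Continuous (act g))
    (hone : ∀ x : X, act 1 x = x)
    (hmul : ∀ (g g' : G) (x : X), act (g * g') x = act g (act g' x))
    (hequi : ∀ ε > 0, ∃ δ > 0, ∀ (g : G) (x y : X), dist x y < δ →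
      dist (act g x) (act g y) < ε) :
    ∀ ε > 0, ∃ δ > 0, ∃ F : Finset G, ∀ z : G → X,
      (∀ g : G, ∀ s ∈ F, dist (act s (z g)) (z (s * g)) < δ) →
      ∃ x : X, ∀ g : G, dist (act g x) (z g) < ε := by
  classical
  obtain ⟨S, hSclos, hSfin⟩ := Group.fg_iff.mp hG
  intro ε hε
  -- a uniform bound on distances
  obtain ⟨C, hC⟩ : ∃ C : ℝ, ∀ x y : X, dist x y ≤ C := by
    obtain ⟨C, hC⟩ := Metric.isBounded_iff.mp (isCompact_univ (X := X)).isBounded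
    exact ⟨C, fun x y => hC (mem_univ x) (mem_univ y)⟩
  -- the invariant "metric"
  set Dd : X → X → ℝ := fun x y => ⨆ g : G, dist (act g x) (act g y) with hDdDef
  have hbdd : ∀ x y : X, BddAbove (Set.range fun g : G => dist (act g x) (act g y)) := by
    intro x y
    refine ⟨C, ?_⟩
    rintro r ⟨g, rfl⟩
    exact hC _ _
  have hDle : ∀ (g : G) (x y : X), dist (act g x) (act g y) ≤ Dd x y :=
    fun g x y => le_ciSup (hbdd x y) g
  have hD1 : ∀ x y : X, dist x y ≤ Dd x y := by
    intro x y
    have := hDle 1 x y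
    rwa [hone, hone] at this
  have hDinv : ∀ (g : G) (x y : X), Dd (act g x) (act g y) = Dd x y := by
    intro g x y
    apply le_antisymm
    · refine ciSup_le fun h => ?_
      rw [← hmul, ← hmul]
      exact hDle (h * g) x y
    · refine ciSup_le fun k => ?_
      have hk : dist (act k x) (act k y)
          = dist (act (k * g⁻¹) (act g x)) (act (k * g⁻¹) (act g y)) := by
        rw [← hmul, ← hmul, inv_mul_cancel_right]
      rw [hk]
      exact hDle (k * g⁻¹) _ _
  have hDsymm : ∀ x y : X, Dd x y = Dd y x := by
    intro x y
    exact iSup_congr fun g => dist_comm _ _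
  have hDsmall : ∀ r : ℝ, 0 < r → ∃ δ > 0, ∀ x y : X, dist x y < δ → Dd x y ≤ r := by
    intro r hr
    obtain ⟨δ, hδ, h⟩ := hequi r hr
    exact ⟨δ, hδ, fun x y hxy => ciSup_le fun g => (h g x y hxy).le⟩
  -- clopen cover with pieces of small Dd-diameter
  obtain ⟨δ1, hδ1, hδ1prop⟩ := hDsmall (ε / 2) (half_pos hε)
  have hδ12 : (0:ℝ) < δ1 / 2 := by positivity
  choose K hKclopen hxK hKsub using fun x : X =>
    compact_exists_isClopen_in_isOpen (isOpen_ball (x := x) (ε := δ1 / 2)) (mem_ball_self hδ12)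
  obtain ⟨t, ht⟩ := isCompact_univ.elim_finite_subcover K (fun x => (hKclopen x).2)
    (fun x _ => mem_iUnion.mpr ⟨x, hxK x⟩)
  set n := Fintype.card ↥t with hn
  set e : ↥t ≃ Fin n := Fintype.equivFin ↥t with he
  set f : Fin n → X := fun i => (e.symm i : X) with hf
  -- disjointified pieces
  set A : Fin n → Set X := fun i => ⋃ j : {j : Fin n // j < i}, K (f j) with hA
  set W : Fin n → Set X := fun i => K (f i) \ A i with hW
  have hWopen : ∀ i, IsOpen (W i) := by
    intro i
    refine (hKclopen (f i)).2.sdiff ?_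
    exact isClosed_iUnion_of_finite fun j => (hKclopen (f j)).1
  have hWsubK : ∀ i, W i ⊆ K (f i) := fun i => diff_subset
  have hcoverW : ∀ x : X, ∃ i, x ∈ W i := by
    intro x
    have hx : x ∈ ⋃ y ∈ t, K y := ht (mem_univ x)
    obtain ⟨y, hyt, hyK⟩ := mem_iUnion₂.mp hx
    set s : Finset (Fin n) := Finset.univ.filter (fun i => x ∈ K (f i)) with hs
    have hne : s.Nonempty := by
      refine ⟨e ⟨y, hyt⟩, ?_⟩
      simp only [hs, Finset.mem_filter, Finset.mem_univ, true_and]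
      have : f (e ⟨y, hyt⟩) = y := by simp [hf]
      rwa [this]
    refine ⟨s.min' hne, ?_, ?_⟩
    · have := s.min'_mem hne
      simpa [hs] using this
    · intro hxA
      obtain ⟨⟨j, hj⟩, hxj⟩ := mem_iUnion.mp hxA
      have hjs : j ∈ s := by simp [hs, hxj]
      exact absurd (s.min'_le j hjs) (not_le_of_gt hj)
  have hdisjW : ∀ i j (x : X), x ∈ W i → x ∈ W j → i = j := by
    intro i j x hxi hxj
    rcases lt_trichotomy i j with h | h | h
    · exact absurd (mem_iUnion.mpr ⟨⟨i, h⟩, hxi.1⟩) hxj.2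
    · exact h
    · exact absurd (mem_iUnion.mpr ⟨⟨j, h⟩, hxj.1⟩) hxi.2
  have hWsmall : ∀ i (x y : X), x ∈ W i → y ∈ W i → Dd x y ≤ ε / 2 := by
    intro i x y hx hy
    have hx' := hKsub (f i) (hWsubK i hx)
    have hy' := hKsub (f i) (hWsubK i hy)
    have hxy : dist x y < δ1 := by
      calc dist x y ≤ dist x (f i) + dist (f i) y := dist_triangle _ _ _
        _ < δ1 / 2 + δ1 / 2 := by
            rw [mem_ball] at hx' hy'
            rw [dist_comm (f i) y]
            exact add_lt_add hx' hy'
        _ = δ1 := add_halves δ1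
    exact hδ1prop x y hxy
  -- Lebesgue number
  obtain ⟨η, hη, hleb⟩ := lebesgue_number_lemma_of_metric isCompact_univ hWopen
    (fun x _ => mem_iUnion.mpr (hcoverW x))
  obtain ⟨δ2, hδ2, hδ2prop⟩ := hDsmall (η / 2) (half_pos hη)
  refine ⟨δ2, hδ2, hSfin.toFinset, ?_⟩
  intro z hz
  -- the chain relation
  set Step : X → X → Prop := fun a b => Dd a b < η with hStep
  set Rel : X → X → Prop := Relation.ReflTransGen Step with hRel
  have hStepSymm : Symmetric Step := by
    intro a b h
    simpa only [hStep, hDsymm b a] using h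
  have hRelSymm : Symmetric Rel := by
    haveI : Std.Symm Step := ⟨fun a b h => hStepSymm h⟩
    exact fun a b h => (Relation.ReflTransGen.stdSymm (r := Step)).symm a b h
  have hRelInv : ∀ (g : G) (a b : X), Rel a b → Rel (act g a) (act g b) := by
    intro g a b hab
    refine Relation.ReflTransGen.lift (act g) (fun p q hpq => ?_) a b hab
    show Dd (act g p) (act g q) < η
    rwa [hDinv]
  have hprop : ∀ a b : X, Rel a b → ∀ i, a ∈ W i → b ∈ W i := by
    intro a b hab
    induction hab with
    | refl => exact fun i h => h
    | @tail p q hap hpq ih =>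
      intro i hai
      have hp := ih i hai
      obtain ⟨j, hj⟩ := hleb p (mem_univ p)
      have hpb : p ∈ ball p η := mem_ball_self hη
      have hqb : q ∈ ball p η := by
        rw [mem_ball, dist_comm]
        exact lt_of_le_of_lt (hD1 p q) hpq
      have hij : i = j := hdisjW i j p hp (hj hpb)
      rw [hij]
      exact hj hqb
  -- single generator steps
  have hstep : ∀ s ∈ S, ∀ g : G, Rel (act s (z g)) (z (s * g)) := by
    intro s hs g
    refine Relation.ReflTransGen.single ?_
    show Dd (act s (z g)) (z (s * g)) < η
    have hd := hz g s (hSfin.mem_toFinset.mpr hs)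
    exact lt_of_le_of_lt (hδ2prop _ _ hd) (half_lt_self hη)
  -- every group element approximately tracks
  have hQ : ∀ g : G, ∀ h : G, Rel (act g (z h)) (z (g * h)) := by
    intro g
    have hg : g ∈ Subgroup.closure S := by rw [hSclos]; exact Subgroup.mem_top g
    refine Subgroup.closure_induction ?_ ?_ ?_ ?_ hg
    · intro s hs h
      exact hstep s hs h
    · intro h
      rw [hone, one_mul]
    · intro a b _ _ Qa Qb h
      have h1 : Rel (act a (act b (z h))) (act a (z (b * h))) := hRelInv a _ _ (Qb h)
      have h2 : Rel (act a (z (b * h))) (z (a * (b * h))) := Qa (b * h)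
      rw [hmul, mul_assoc]
      exact h1.trans h2
    · intro a _ Qa h
      have h1 : Rel (act a (z (a⁻¹ * h))) (z (a * (a⁻¹ * h))) := Qa (a⁻¹ * h)
      rw [mul_inv_cancel_left] at h1
      have h2 : Rel (z h) (act a (z (a⁻¹ * h))) := hRelSymm h1
      have h3 := hRelInv a⁻¹ _ _ h2
      rw [← hmul, inv_mul_cancel, hone] at h3
      exact h3
  -- conclude: z 1 traces
  refine ⟨z 1, fun g => ?_⟩
  have hrel : Rel (act g (z 1)) (z g) := by
    have := hQ g 1
    rwa [mul_one] at this
  obtain ⟨i, hi⟩ := hcoverW (act g (z 1))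
  have hzi := hprop _ _ hrel i hi
  have hDfin : Dd (act g (z 1)) (z g) ≤ ε / 2 := hWsmall i _ _ hi hzi
  exact lt_of_le_of_lt (le_trans (hD1 _ _) hDfin) (half_lt_self hε)
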